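/- Let e be a nonzero idempotent in a monoid M with zero, J its 𝒥-class, and P(e) = J(e)/I(e) the principal factor. Then e M e ∩ J is a group under the multiplication of M with identity element e. -/
import Mathlib


/-- `Jset a = M a M`, the principal two-sided ideal generated by `a`. -/
def Jset {M : Type*} [Monoid M] (a : M) : Set M := {z | ∃ u v : M, z = u * a * v}

/-- If `a ∈ Jset b` then `Jset a ⊆ Jset b`. -/
lemma Jset_subset {M : Type*} [Monoid M] {a b : M} (h : a ∈ Jset b) :
    Jset a ⊆ Jset b := by
  obtain ⟨s, t, hst⟩ := h
  rintro z ⟨u, v, rfl⟩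
  exact ⟨u * s, t * v, by rw [hst]; simp [mul_assoc]⟩

/-- In a finite monoid, inside `eMe` a one-sided inverse is two-sided. -/
lemma finite_one_sided {M : Type*} [Monoid M] [Finite M] {e p q : M}
    (hee : e * e = e)
    (hp1 : e * p = p) (hp2 : p * e = p) (hq1 : e * q = q) (hq2 : q * e = q)
    (h : p * q = e) : q * p = e := by
  let S := {m : M // e * m = m ∧ m * e = m}
  haveI : Finite S := Subtype.finite
  let F : S → S := fun s => ⟨p * s.1, by rw [← mul_assoc, hp1], by rw [mul_assoc, s.2.2]⟩
  have hsurj : Function.Surjective F := by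
    intro t
    refine ⟨⟨q * t.1, by rw [← mul_assoc, hq1], by rw [mul_assoc, t.2.2]⟩, ?_⟩
    apply Subtype.ext
    show p * (q * t.1) = t.1
    rw [← mul_assoc, h, t.2.1]
  have hinj : Function.Injective F := Finite.injective_iff_surjective.mpr hsurj
  have key : F ⟨q * p, by rw [← mul_assoc, hq1], by rw [mul_assoc, hp2]⟩
      = F ⟨e, hee, hee⟩ := by
    apply Subtype.ext
    show p * (q * p) = p * e
    rw [← mul_assoc, h, hp1, hp2]
  exact congrArg Subtype.val (hinj key)

/-- For a nonzero idempotent `e` of a finite monoid with zero, the set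
`e M e ∩ 𝒥_e` is a group under the multiplication of `M` with identity `e`. -/
theorem maximal_subgroup_is_group {M : Type*} [MonoidWithZero M] [Finite M]
    (e : M) (he : e * e = e) (hne : e ≠ 0) :
    e ∈ {x : M | (∃ m : M, x = e * m * e) ∧ Jset x = Jset e} ∧
    (∀ x ∈ {x : M | (∃ m : M, x = e * m * e) ∧ Jset x = Jset e},
      ∀ y ∈ {x : M | (∃ m : M, x = e * m * e) ∧ Jset x = Jset e},
        x * y ∈ {x : M | (∃ m : M, x = e * m * e) ∧ Jset x = Jset e}) ∧
    (∀ x ∈ {x : M | (∃ m : M, x = e * m * e) ∧ Jset x = Jset e},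
      x * e = x ∧ e * x = x) ∧
    (∀ x ∈ {x : M | (∃ m : M, x = e * m * e) ∧ Jset x = Jset e},
      ∃ y ∈ {x : M | (∃ m : M, x = e * m * e) ∧ Jset x = Jset e},
        x * y = e ∧ y * x = e) := by
  -- basic facts about members of the set
  have habs : ∀ x : M, (∃ m : M, x = e * m * e) → e * x = x ∧ x * e = x := by
    rintro x ⟨m, rfl⟩
    constructor
    · rw [← mul_assoc, ← mul_assoc, he]
    · rw [mul_assoc, mul_assoc, he, ← mul_assoc]
  -- inverse existence (the core fact)
  have hinv : ∀ x ∈ {x : M | (∃ m : M, x = e * m * e) ∧ Jset x = Jset e},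
      ∃ y ∈ {x : M | (∃ m : M, x = e * m * e) ∧ Jset x = Jset e},
        x * y = e ∧ y * x = e := by
    rintro x ⟨hx1, hx2⟩
    obtain ⟨hex, hxe⟩ := habs x hx1
    -- e ∈ Jset e = Jset x, so e = u x v, hence e = (e u e) x (e v e)
    have heJ : e ∈ Jset x := by rw [hx2]; exact ⟨1, 1, by simp⟩
    obtain ⟨u, v, huv⟩ := heJ
    obtain ⟨hea, hae⟩ := habs (e * u * e) ⟨u, rfl⟩
    obtain ⟨heb, hbe⟩ := habs (e * v * e) ⟨v, rfl⟩
    have hab : (e * u * e) * x * (e * v * e) = e := by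
      have key : e * (x * (e * (v * e))) = x * (v * e) := by
        rw [← mul_assoc e x, hex, ← mul_assoc x e, hxe]
      calc (e * u * e) * x * (e * v * e)
          = e * (u * (e * (x * (e * (v * e))))) := by simp only [mul_assoc]
        _ = e * (u * (x * (v * e))) := by rw [key]
        _ = e * (u * x * v) * e := by simp only [mul_assoc]
        _ = e * e * e := by rw [← huv]
        _ = e := by rw [he, he]
    -- ((e u e) * x) * (e v e) = e, so (e v e) * ((e u e) * x) = e
    have h1 : (e * v * e) * ((e * u * e) * x) = e :=
      finite_one_sided he
        (by rw [← mul_assoc e (e * u * e) x, hea])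
        (by rw [mul_assoc (e * u * e) x e, hxe])
        heb hbe hab
    -- (e u e) * (x * (e v e)) = e, so (x * (e v e)) * (e u e) = e
    have h2 : (x * (e * v * e)) * (e * u * e) = e :=
      finite_one_sided he hea hae
        (by rw [← mul_assoc e x (e * v * e), hex])
        (by rw [mul_assoc x (e * v * e) e, hbe])
        (by rw [← mul_assoc (e * u * e) x (e * v * e)]; exact hab)
    set a := e * u * e with ha
    set b := e * v * e with hb
    have hyx : (b * a) * x = e := by rw [mul_assoc b a x]; exact h1
    have hxy : x * (b * a) = e := by rw [← mul_assoc x b a]; exact h2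
    refine ⟨b * a, ⟨⟨v * e * e * u, ?_⟩, ?_⟩, hxy, hyx⟩
    · show b * a = e * (v * e * e * u) * e
      rw [ha, hb]; simp only [mul_assoc]
    · apply Set.Subset.antisymm
      · refine Jset_subset ⟨e, b * a, ?_⟩
        have : e * e * (b * a) = b * a := by rw [he, ← mul_assoc e b a, heb]
        exact this.symm
      · refine Jset_subset ⟨x, e, ?_⟩
        have : x * (b * a) * e = e := by rw [hxy, he]
        exact this.symm
  refine ⟨⟨⟨e, by rw [he, he]⟩, rfl⟩, ?_, ?_, hinv⟩
  · -- closure under multiplication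
    rintro x ⟨hx1, hx2⟩ y ⟨hy1, hy2⟩
    obtain ⟨hex, hxe⟩ := habs x hx1
    obtain ⟨hey, hye⟩ := habs y hy1
    refine ⟨⟨x * e * y, ?_⟩, ?_⟩
    · have : e * (x * e * y) * e = x * y := by
        rw [hxe, ← mul_assoc e x y, hex, mul_assoc x y e, hye]
      exact this.symm
    obtain ⟨x', ⟨hx'1, _⟩, _, hx'x⟩ := hinv x ⟨hx1, hx2⟩
    obtain ⟨y', ⟨hy'1, _⟩, hyy', hy'y⟩ := hinv y ⟨hy1, hy2⟩
    apply Set.Subset.antisymm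
    · -- x*y ∈ Jset e
      have hy : y ∈ Jset e := ⟨e, y, by rw [he, hey]⟩
      obtain ⟨s, t, hst⟩ := hy
      exact Jset_subset ⟨x * s, t, by rw [hst]; simp only [mul_assoc]⟩
    · -- e ∈ Jset (x*y)
      refine Jset_subset ⟨y' * x', e, ?_⟩
      have hkey : y' * x' * (x * y) = e := by
        rw [mul_assoc y' x' (x * y), ← mul_assoc x' x y, hx'x, hey, hy'y]
      rw [hkey, he]
  · rintro x ⟨hx1, _⟩
    exact ⟨(habs x hx1).2, (habs x hx1).1⟩
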